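/- Let π(θ̃) ∝ 1_valid(θ̃) ∏_{n=1}^P γ_n(θ̃_n) on {0,…,M+1}^P with all γ_n strictly positive on {0,…,M+1}. Then from any valid state, any other valid state is reachable with positive probability in at most P systematic-scan Gibbs sweeps (in particular, the Gibbs chain restricted to valid states is irreducible). -/

import Mathlib

/-- A valid (vector of) extended associations: no two distinct coordinates
take the same value in `{1,…,M}`. -/
def ValidGA (P M : ℕ) (θ : Fin P → Fin (M + 2)) : Prop :=
  ∀ i j, i ≠ j → 1 ≤ (θ i : ℕ) → (θ i : ℕ) ≤ M → θ i ≠ θ j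

open Classical

lemma validGA_mask (P M : ℕ) (θ : Fin P → Fin (M + 2)) (h : ValidGA P M θ)
    (p : Fin P → Prop) [DecidablePred p] : ValidGA P M (fun i => if p i then θ i else 0) := by
  intro i j hij h1 h2
  simp only at h1 h2 ⊢
  by_cases hpi : p i
  · rw [if_pos hpi] at h1 h2 ⊢
    by_cases hpj : p j
    · rw [if_pos hpj]; exact h i j hij h1 h2
    · rw [if_neg hpj]
      intro hc
      rw [hc] at h1
      simp at h1
  · rw [if_neg hpi] at h1
    simp at h1

lemma list_prod_nonneg {S : Type*} [Fintype S] [DecidableEq S] :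
    ∀ (L : List (Matrix S S ℝ)), (∀ A ∈ L, ∀ x y, 0 ≤ A x y) →
    ∀ x y, 0 ≤ L.prod x y := by
  intro L
  induction L with
  | nil =>
    intro _ x y
    simp only [List.prod_nil, Matrix.one_apply]
    split <;> norm_num
  | cons A L ih =>
    intro h x y
    rw [List.prod_cons, Matrix.mul_apply]
    apply Finset.sum_nonneg
    intro z _
    exact mul_nonneg (h A (by simp) x z)
      (ih (fun B hB => h B (by simp [hB])) z y)

lemma list_prod_pos_entry {S : Type*} [Fintype S] [DecidableEq S] :
    ∀ (L : List (Matrix S S ℝ)), (∀ A ∈ L, ∀ x y, 0 ≤ A x y) →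
    ∀ (f : ℕ → S), (∀ k (hk : k < L.length), 0 < (L.get ⟨k, hk⟩) (f k) (f (k + 1))) →
    0 < L.prod (f 0) (f L.length) := by
  intro L
  induction L with
  | nil =>
    intro _ f _
    simp [Matrix.one_apply]
  | cons A L ih =>
    intro h f hstep
    rw [List.prod_cons, Matrix.mul_apply]
    apply Finset.sum_pos'
    · intro z _
      exact mul_nonneg (h A (by simp) (f 0) z)
        (list_prod_nonneg L (fun B hB => h B (by simp [hB])) z _)
    · refine ⟨f 1, Finset.mem_univ _, ?_⟩
      have h0 : 0 < A (f 0) (f 1) := hstep 0 (by simp)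
      have h1 : 0 < L.prod (f 1) (f (L.length + 1)) := by
        have := ih (fun B hB => h B (by simp [hB])) (fun n => f (n + 1))
          (fun k hk => by
            have := hstep (k + 1) (by simp; omega)
            simpa using this)
        simpa using this
      rw [List.length_cons]
      exact mul_pos h0 h1

theorem stmt17 (P M : ℕ) (hP : 0 < P) (γ : Fin P → ℕ → ℝ) (hγ : ∀ n m, 0 < γ n m)
    (w : (Fin P → Fin (M + 2)) → ℝ)
    (hw : ∀ θ, w θ = if ValidGA P M θ then ∏ i, γ i (θ i : ℕ) else 0)
    (K : Fin P → Matrix (Fin P → Fin (M + 2)) (Fin P → Fin (M + 2)) ℝ)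
    (hK : ∀ n θ θ', K n θ θ' =
      if ∀ i, i ≠ n → θ' i = θ i then
        w θ' / ∑ m : Fin (M + 2), w (Function.update θ n m)
      else 0) :
    ∀ θ θ', ValidGA P M θ → ValidGA P M θ' →
      ∃ t, 1 ≤ t ∧ t ≤ P ∧ 0 < ((List.ofFn K).prod ^ t) θ θ' := by
  -- basic positivity facts
  have wnn : ∀ x, 0 ≤ w x := by
    intro x; rw [hw]; split
    · exact Finset.prod_nonneg fun i _ => (hγ i _).le
    · exact le_refl 0
  have wpos : ∀ x, ValidGA P M x → 0 < w x := by
    intro x hx; rw [hw, if_pos hx]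
    exact Finset.prod_pos fun i _ => hγ i _
  have Knn : ∀ n x y, 0 ≤ K n x y := by
    intro n x y; rw [hK]; split
    · exact div_nonneg (wnn _) (Finset.sum_nonneg fun m _ => wnn _)
    · exact le_refl 0
  have Kpos : ∀ n x y, (∀ i, i ≠ n → y i = x i) → ValidGA P M y → 0 < K n x y := by
    intro n x y hagree hy
    rw [hK, if_pos hagree]
    apply div_pos (wpos _ hy)
    apply Finset.sum_pos'
    · intro m _; exact wnn _
    · refine ⟨y n, Finset.mem_univ _, ?_⟩
      have : Function.update x n (y n) = y := by
        funext i
        rcases eq_or_ne i n with rfl | hi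
        · simp
        · rw [Function.update_of_ne hi]; exact (hagree i hi).symm
      rw [this]
      exact wpos _ hy
  have LKnn : ∀ A ∈ List.ofFn K, ∀ x y, (0:ℝ) ≤ A x y := by
    intro A hA x y
    rw [List.mem_ofFn] at hA
    obtain ⟨n, rfl⟩ := hA
    exact Knn n x y
  set S := (List.ofFn K).prod with hS
  have Snn : ∀ x y, 0 ≤ S x y := list_prod_nonneg _ LKnn
  -- a full sweep along a chain of valid states
  have sweep : ∀ (f : ℕ → Fin P → Fin (M + 2)),
      (∀ k (hk : k < P), (∀ i, i ≠ (⟨k, hk⟩ : Fin P) → f (k + 1) i = f k i) ∧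
        ValidGA P M (f (k + 1))) →
      0 < S (f 0) (f P) := by
    intro f hf
    have hlen : (List.ofFn K).length = P := List.length_ofFn
    have := list_prod_pos_entry (List.ofFn K) LKnn f (fun k hk => by
      have hk' : k < P := by rwa [hlen] at hk
      have hget : (List.ofFn K).get ⟨k, hk⟩ = K ⟨k, hk'⟩ := by
        simp [List.get_ofFn]
      rw [hget]
      exact Kpos _ _ _ (hf k hk').1 (hf k hk').2)
    rwa [hlen] at this
  intro θ θ' hθ hθ'
  -- chain from θ down to all-zeros
  have down : 0 < S θ (fun _ => 0) := by
    have hchain : 0 < S (fun i : Fin P => if (0 : ℕ) ≤ (i : ℕ) then θ i else 0)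
        (fun i : Fin P => if P ≤ (i : ℕ) then θ i else 0) :=
      sweep (fun k i => if (k : ℕ) ≤ (i : ℕ) then θ i else 0)
      (fun k hk => by
        constructor
        · intro i hi
          have hik : (i : ℕ) ≠ k := fun hc => hi (Fin.ext hc)
          have : (k + 1 ≤ (i : ℕ)) ↔ (k ≤ (i : ℕ)) := by omega
          rw [if_congr this rfl rfl]
        · show ValidGA P M fun i => if k + 1 ≤ (i : ℕ) then θ i else 0
          exact validGA_mask P M θ hθ (fun i => k + 1 ≤ (i : ℕ)))
    have h0 : (fun i : Fin P => if (0 : ℕ) ≤ (i : ℕ) then θ i else 0) = θ := by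
      funext i; simp
    have hPa : (fun i : Fin P => if P ≤ (i : ℕ) then θ i else 0) =
        (fun _ : Fin P => (0 : Fin (M + 2))) := by
      funext i
      rw [if_neg (by omega : ¬ P ≤ (i : ℕ))]
    rwa [h0, hPa] at hchain
  -- chain from all-zeros up to θ'
  have up : 0 < S (fun _ => 0) θ' := by
    have hchain : 0 < S (fun i : Fin P => if (i : ℕ) < 0 then θ' i else 0)
        (fun i : Fin P => if (i : ℕ) < P then θ' i else 0) :=
      sweep (fun k i => if (i : ℕ) < k then θ' i else 0)
      (fun k hk => by
        constructor
        · intro i hi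
          have hik : (i : ℕ) ≠ k := fun hc => hi (Fin.ext hc)
          have : ((i : ℕ) < k + 1) ↔ ((i : ℕ) < k) := by omega
          rw [if_congr this rfl rfl]
        · show ValidGA P M fun i => if (i : ℕ) < k + 1 then θ' i else 0
          exact validGA_mask P M θ' hθ' (fun i => (i : ℕ) < k + 1))
    have h0 : (fun i : Fin P => if (i : ℕ) < 0 then θ' i else 0) =
        (fun _ : Fin P => (0 : Fin (M + 2))) := by
      funext i; simp
    have hPa : (fun i : Fin P => if (i : ℕ) < P then θ' i else 0) = θ' := by
      funext i; rw [if_pos i.isLt]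
    rwa [h0, hPa] at hchain
  rcases eq_or_lt_of_le (Nat.one_le_iff_ne_zero.mpr hP.ne') with hP1 | hP2
  · -- P = 1 : one sweep suffices
    subst hP1
    refine ⟨1, le_refl 1, le_refl 1, ?_⟩
    rw [pow_one]
    have hchain : 0 < S θ θ' :=
      sweep (fun k => if k = 0 then θ else θ') (fun k hk => by
        have hk0 : k = 0 := by omega
        subst hk0
        constructor
        · intro i hi
          exfalso
          exact hi (Subsingleton.elim i _)
        · show ValidGA 1 M θ'
          exact hθ')
    exact hchain
  · -- P ≥ 2 : two sweeps through the all-zeros state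
    refine ⟨2, by omega, by omega, ?_⟩
    rw [pow_two, Matrix.mul_apply]
    apply Finset.sum_pos'
    · intro z _; exact mul_nonneg (Snn _ _) (Snn _ _)
    · exact ⟨fun _ => 0, Finset.mem_univ _, mul_pos down up⟩
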